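/- arXiv:2605.04351 — 4 statements merged into one kernel-verified Lean document; each statement's English description precedes it below -/
import Mathlib

section
/- Let a > 0 and let μ be a locally finite Borel measure on the open interval (0,∞) of the real line satisfying the scaling law μ(λ·A) = λ^a · μ(A) for every Borel set A ⊆ (0,∞) and every λ > 0 (where λ·A = {λu : u ∈ A}). Then there exists a constant C ≥ 0 such that μ equals the measure with density u ↦ C · u^(a−1) with respect to Lebesgue measure on (0,∞). -/
open MeasureTheory Set

/-- A locally finite Borel measure on `(0,∞)` (encoded as a Borel measure on
`ℝ` vanishing on `(-∞,0]` and locally finite at every point of `(0,∞)`) satisfying the scaling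
law `μ(λ·A) = λ^a · μ(A)` has density `C · u^(a-1)` with respect to Lebesgue measure
on `(0,∞)`, for some constant `C ≥ 0`. -/
theorem scaling_covariant_measure_is_power_density
    (a : ℝ) (ha : 0 < a) (μ : Measure ℝ)
    (hsupp : μ (Iic 0) = 0)
    (hloc : ∀ u : ℝ, 0 < u → ∃ s ∈ nhds u, μ s < ⊤)
    (hscal : ∀ lam : ℝ, 0 < lam → ∀ A : Set ℝ, MeasurableSet A → A ⊆ Ioi 0 →
      μ ((fun u => lam * u) '' A) = ENNReal.ofReal (lam ^ a) * μ A) :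
    ∃ C : ℝ, 0 ≤ C ∧
      μ = (volume.restrict (Ioi 0)).withDensity
        (fun u => ENNReal.ofReal (C * u ^ (a - 1))) := by
  classical
  -- finiteness on compact subintervals of (0, ∞)
  have hcomp : ∀ k l : ℝ, 0 < k → μ (Icc k l) < ⊤ := by
    intro k l hk
    let U : ℝ → Set ℝ := fun u => if h : 0 < u then (hloc u h).choose else univ
    have hU : ∀ u ∈ Icc k l, U u ∈ nhds u := by
      intro u hu
      have hu0 : 0 < u := hk.trans_le hu.1
      simp only [U, dif_pos hu0]
      exact (hloc u hu0).choose_spec.1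
    obtain ⟨t, hts, hcov⟩ := isCompact_Icc.elim_nhds_subcover U hU
    calc μ (Icc k l) ≤ μ (⋃ u ∈ t, U u) := measure_mono hcov
      _ ≤ ∑ u ∈ t, μ (U u) := measure_biUnion_finset_le t U
      _ < ⊤ := by
          rw [ENNReal.sum_lt_top]
          intro u hu
          have hu0 : 0 < u := hk.trans_le (hts u hu).1
          simpa only [U, dif_pos hu0] using (hloc u hu0).choose_spec.2
  set c := μ (Ioc 0 1) with hc
  -- scaling of `Ioc 0 t`
  have hIoc0 : ∀ t : ℝ, 0 < t → μ (Ioc 0 t) = ENNReal.ofReal (t ^ a) * c := by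
    intro t ht
    have h := hscal t ht (Ioc 0 1) measurableSet_Ioc Ioc_subset_Ioi_self
    rwa [show (fun u => t * u) = (t * ·) from rfl, image_mul_left_Ioc ht, mul_zero, mul_one] at h
  -- finiteness of `c`
  have hm : μ (Ioc (1/2 : ℝ) 1) < ⊤ :=
    (measure_mono Ioc_subset_Icc_self).trans_lt (hcomp _ _ one_half_pos)
  have hseg : ∀ n : ℕ, μ (Ioc ((1/2:ℝ)^(n+1)) ((1/2:ℝ)^n))
      = ENNReal.ofReal ((1/2:ℝ) ^ a) ^ n * μ (Ioc (1/2:ℝ) 1) := by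
    intro n
    have hpow : (0:ℝ) < (1/2:ℝ)^n := pow_pos one_half_pos n
    have h := hscal ((1/2:ℝ)^n) hpow (Ioc (1/2) 1) measurableSet_Ioc
      (fun x hx => one_half_pos.trans hx.1)
    rw [show (fun u => (1/2:ℝ)^n * u) = ((1/2:ℝ)^n * ·) from rfl,
      image_mul_left_Ioc hpow, mul_one, ← pow_succ] at h
    rw [h]
    congr 1
    have h2 : ((1/2:ℝ)^n) ^ a = ((1/2:ℝ) ^ a) ^ n := by
      rw [← Real.rpow_natCast ((1/2:ℝ)) n, ← Real.rpow_natCast ((1/2:ℝ) ^ a) n,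
        ← Real.rpow_mul (by norm_num), ← Real.rpow_mul (by norm_num), mul_comm]
    rw [h2, ENNReal.ofReal_pow (Real.rpow_nonneg (by norm_num) a)]
  have hcfin : c < ⊤ := by
    have hcover : Ioc (0:ℝ) 1 ⊆ ⋃ n : ℕ, Ioc ((1/2:ℝ)^(n+1)) ((1/2:ℝ)^n) := by
      intro x hx
      have hex : ∃ n : ℕ, (1/2:ℝ)^(n+1) < x := by
        obtain ⟨n, hn⟩ := exists_pow_lt_of_lt_one hx.1 (by norm_num : (1/2:ℝ) < 1)
        exact ⟨n, lt_of_le_of_lt (pow_le_pow_of_le_one (by norm_num) (by norm_num)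
          (Nat.le_succ n)) hn⟩
      refine mem_iUnion.2 ⟨Nat.find hex, Nat.find_spec hex, ?_⟩
      by_cases h0 : Nat.find hex = 0
      · rw [h0]; simpa using hx.2
      · have hpos : 0 < Nat.find hex := Nat.pos_of_ne_zero h0
        have hmin := Nat.find_min hex (Nat.sub_lt hpos one_pos)
        rw [show Nat.find hex - 1 + 1 = Nat.find hex by omega] at hmin
        exact le_of_not_gt hmin
    have hr1 : ENNReal.ofReal ((1/2:ℝ) ^ a) < 1 := by
      rw [← ENNReal.ofReal_one]
      exact ENNReal.ofReal_lt_ofReal_iff (by norm_num) |>.2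
        (Real.rpow_lt_one (by norm_num) (by norm_num) ha)
    calc c ≤ μ (⋃ n : ℕ, Ioc ((1/2:ℝ)^(n+1)) ((1/2:ℝ)^n)) := measure_mono hcover
      _ ≤ ∑' n : ℕ, μ (Ioc ((1/2:ℝ)^(n+1)) ((1/2:ℝ)^n)) := measure_iUnion_le _
      _ = ∑' n : ℕ, ENNReal.ofReal ((1/2:ℝ) ^ a) ^ n * μ (Ioc (1/2:ℝ) 1) := by
          simp_rw [hseg]
      _ = (1 - ENNReal.ofReal ((1/2:ℝ) ^ a))⁻¹ * μ (Ioc (1/2:ℝ) 1) := by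
          rw [ENNReal.tsum_mul_right, ENNReal.tsum_geometric]
      _ < ⊤ := ENNReal.mul_lt_top (ENNReal.inv_lt_top.2 (tsub_pos_of_lt hr1)) hm
  -- the constant
  set C := a * c.toReal with hCdef
  have hC0 : 0 ≤ C := mul_nonneg ha.le ENNReal.toReal_nonneg
  set ν := (volume.restrict (Ioi 0)).withDensity
    (fun u => ENNReal.ofReal (C * u ^ (a - 1))) with hνdef
  have hν_apply : ∀ S : Set ℝ, MeasurableSet S →
      ν S = ∫⁻ u in S ∩ Ioi 0, ENNReal.ofReal (C * u ^ (a-1)) := by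
    intro S hS
    rw [hνdef, withDensity_apply _ hS, Measure.restrict_restrict hS]
  -- ν on Ioc 0 t
  have hν0 : ∀ t : ℝ, 0 < t → ν (Ioc 0 t) = ENNReal.ofReal (t ^ a) * c := by
    intro t ht
    rw [hν_apply _ measurableSet_Ioc, inter_eq_left.2 Ioc_subset_Ioi_self]
    have hint : IntegrableOn (fun u : ℝ => u ^ (a-1)) (Ioc 0 t) volume := by
      have h := intervalIntegral.intervalIntegrable_rpow' (a := 0) (b := t) (by linarith : (-1:ℝ) < a - 1)
      rwa [intervalIntegrable_iff_integrableOn_Ioc_of_le ht.le] at h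
    have hintC : IntegrableOn (fun u : ℝ => C * u ^ (a-1)) (Ioc 0 t) volume :=
      hint.const_mul C
    have hnn : 0 ≤ᵐ[volume.restrict (Ioc 0 t)] fun u : ℝ => C * u ^ (a-1) := by
      filter_upwards [ae_restrict_mem measurableSet_Ioc] with u hu
      exact mul_nonneg hC0 (Real.rpow_nonneg hu.1.le _)
    rw [← ofReal_integral_eq_lintegral_ofReal hintC hnn]
    have hint2 : ∫ u in Ioc 0 t, u ^ (a-1) = t ^ a / a := by
      rw [← intervalIntegral.integral_of_le ht.le,
        integral_rpow (Or.inl (by linarith : (-1:ℝ) < a - 1))]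
      have he : a - 1 + 1 = a := by ring
      rw [he, Real.zero_rpow ha.ne', sub_zero]
    rw [MeasureTheory.integral_const_mul, hint2,
      show C * (t ^ a / a) = t ^ a * c.toReal by rw [hCdef]; field_simp,
      ENNReal.ofReal_mul (Real.rpow_nonneg ht.le a), ENNReal.ofReal_toReal hcfin.ne]
  -- ν vanishes on Iic 0
  have hνsupp : ν (Iic 0) = 0 := by
    rw [hν_apply _ measurableSet_Iic,
      show Iic (0:ℝ) ∩ Ioi 0 = ∅ by
        apply eq_empty_iff_forall_notMem.2
        rintro x ⟨h1, h2⟩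
        exact absurd ((mem_Ioi.1 h2).trans_le (mem_Iic.1 h1)) (lt_irrefl 0)]
    simp
  -- finiteness of μ on Ioc intervals
  have hμfin : ∀ s t : ℝ, μ (Ioc s t) ≠ ⊤ := by
    intro s t
    rcases le_or_gt t 0 with h | h
    · rw [measure_mono_null (Ioc_subset_Iic_self.trans (Iic_subset_Iic.2 h)) hsupp]
      exact ENNReal.zero_ne_top
    · have hsub : Ioc s t ⊆ Iic 0 ∪ Ioc 0 t := by
        intro x hx
        rcases le_or_gt x 0 with h' | h'
        · exact Or.inl h'
        · exact Or.inr ⟨h', hx.2⟩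
      have hle : μ (Ioc s t) ≤ ENNReal.ofReal (t ^ a) * c := by
        calc μ (Ioc s t) ≤ μ (Iic 0 ∪ Ioc 0 t) := measure_mono hsub
          _ ≤ μ (Iic 0) + μ (Ioc 0 t) := measure_union_le _ _
          _ = ENNReal.ofReal (t ^ a) * c := by rw [hsupp, zero_add, hIoc0 t h]
      exact ne_top_of_le_ne_top (ENNReal.mul_ne_top ENNReal.ofReal_ne_top hcfin.ne) hle
  -- the main identity on Ioc intervals
  have key : ∀ s t : ℝ, s < t → μ (Ioc s t) = ν (Ioc s t) := by
    intro s t hst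
    rcases le_or_gt t 0 with ht | ht
    · rw [measure_mono_null (Ioc_subset_Iic_self.trans (Iic_subset_Iic.2 ht)) hsupp,
        measure_mono_null (Ioc_subset_Iic_self.trans (Iic_subset_Iic.2 ht)) hνsupp]
    · rcases le_or_gt s 0 with hs | hs
      · have hred : ∀ (ρ : Measure ℝ), ρ (Iic 0) = 0 → ρ (Ioc s t) = ρ (Ioc 0 t) := by
          intro ρ hρ
          refine le_antisymm ?_ (measure_mono (Ioc_subset_Ioc_left hs))
          calc ρ (Ioc s t) ≤ ρ (Iic 0 ∪ Ioc 0 t) := measure_mono (by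
                intro x hx
                rcases le_or_gt x 0 with h' | h'
                · exact Or.inl h'
                · exact Or.inr ⟨h', hx.2⟩)
            _ ≤ ρ (Iic 0) + ρ (Ioc 0 t) := measure_union_le _ _
            _ = ρ (Ioc 0 t) := by rw [hρ, zero_add]
        rw [hred μ hsupp, hred ν hνsupp, hIoc0 t ht, hν0 t ht]
      · have h1 : μ (Ioc 0 s) + μ (Ioc s t) = μ (Ioc 0 t) := by
          rw [← measure_union (Set.Ioc_disjoint_Ioc_of_le le_rfl) measurableSet_Ioc,
            Ioc_union_Ioc_eq_Ioc hs.le hst.le]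
        have h2 : ν (Ioc 0 s) + ν (Ioc s t) = ν (Ioc 0 t) := by
          rw [← measure_union (Set.Ioc_disjoint_Ioc_of_le le_rfl) measurableSet_Ioc,
            Ioc_union_Ioc_eq_Ioc hs.le hst.le]
        have heq0 : μ (Ioc 0 s) = ν (Ioc 0 s) := by rw [hIoc0 s hs, hν0 s hs]
        have hfinν : ν (Ioc 0 s) ≠ ⊤ := by
          rw [hν0 s hs]
          exact ENNReal.mul_ne_top ENNReal.ofReal_ne_top hcfin.ne
        have hsum : ν (Ioc 0 s) + μ (Ioc s t) = ν (Ioc 0 s) + ν (Ioc s t) := by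
          rw [← heq0, h1, hIoc0 t ht, ← hν0 t ht, ← h2, heq0]
        exact (ENNReal.add_right_inj hfinν).1 hsum
  exact ⟨C, hC0, Measure.ext_of_Ioc' μ ν (fun s t _ => hμfin s t) (fun s t hst => key s t hst)⟩
end

section
/- Let a ∈ ℝ and let ν be a locally finite Borel measure on ℝ satisfying ν(E + s) = e^(a·s) · ν(E) for every Borel set E ⊆ ℝ and every s ∈ ℝ. Then there exists a constant C ≥ 0 such that ν equals the measure with density t ↦ C · e^(a·t) with respect to Lebesgue measure on ℝ. -/
open MeasureTheory Set
open scoped ENNReal NNReal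

/-- If a locally finite Borel measure `ν` on `ℝ` satisfies
`ν(E + s) = e^(a·s) · ν(E)` for all Borel `E` and all `s`, then `ν` has density
`t ↦ C · e^(a·t)` with respect to Lebesgue measure, for some constant `C ≥ 0`. -/
theorem quasi_invariant_measure_is_exponential_density
    (a : ℝ) (ν : Measure ℝ) [IsLocallyFiniteMeasure ν]
    (hquasi : ∀ E : Set ℝ, MeasurableSet E → ∀ s : ℝ,
      ν ((fun t => t + s) '' E) = ENNReal.ofReal (Real.exp (a * s)) * ν E) :
    ∃ C : ℝ, 0 ≤ C ∧
      ν = volume.withDensity (fun t => ENNReal.ofReal (C * Real.exp (a * t))) := by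
  set g : ℝ → ℝ≥0∞ := fun t => ENNReal.ofReal (Real.exp (-a * t)) with hg
  have hgmeas : Measurable g := by
    apply ENNReal.measurable_ofReal.comp
    exact (Real.continuous_exp.comp (continuous_const.mul continuous_id)).measurable
  set μ : Measure ℝ := ν.withDensity g with hμ
  have hloc : IsLocallyFiniteMeasure μ :=
    IsLocallyFiniteMeasure.withDensity_ofReal
      (Real.continuous_exp.comp (continuous_const.mul continuous_id))
  -- translation maps on ν
  have hmapν : ∀ s : ℝ, Measure.map (fun t => t + s) ν
      = ENNReal.ofReal (Real.exp (-a * s)) • ν := by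
    intro s
    ext F hF
    rw [Measure.map_apply (measurable_add_const s) hF]
    have him : (fun t => t + s) ⁻¹' F = (fun t => t + (-s)) '' F := by
      ext t
      constructor
      · intro h; exact ⟨t + s, h, by ring⟩
      · rintro ⟨x, hx, rfl⟩; simpa using hx
    rw [him, hquasi F hF (-s)]
    simp [mul_comm, mul_neg]
  -- invariance of μ
  have hinv : μ.IsAddLeftInvariant := by
    constructor
    intro c
    ext E hE
    rw [Measure.map_apply (measurable_const_add c) hE]
    have him : (fun t => c + t) ⁻¹' E = (fun t => t + (-c)) '' E := by
      ext t
      constructor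
      · intro h; exact ⟨c + t, h, by ring⟩
      · rintro ⟨x, hx, rfl⟩; simpa [add_comm] using hx
    rw [him]
    set s : ℝ := -c with hs
    have hFmeas : MeasurableSet ((fun t => t + s) '' E) := by
      have : (fun t => t + s) '' E = (fun t => t + (-s)) ⁻¹' E := by
        ext t
        constructor
        · rintro ⟨x, hx, rfl⟩; simpa using hx
        · intro h; exact ⟨t + -s, h, by ring⟩
      rw [this]; exact (measurable_add_const (-s)) hE
    -- compute μ (E + s) via change of variables
    have h1 : μ ((fun t => t + s) '' E) = ∫⁻ t in (fun t => t + s) '' E, g t ∂ν := by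
      rw [hμ, withDensity_apply _ hFmeas]
    have h2 : μ E = ∫⁻ t in E, g t ∂ν := by rw [hμ, withDensity_apply _ hE]
    have key : ∫⁻ u, ((fun t => t + s) '' E).indicator g u ∂(Measure.map (fun t => t + s) ν)
        = ∫⁻ t, ((fun t => t + s) '' E).indicator g (t + s) ∂ν :=
      lintegral_map (hgmeas.indicator hFmeas) (measurable_add_const s)
    have hL : ∫⁻ t, ((fun t => t + s) '' E).indicator g (t + s) ∂ν
        = ENNReal.ofReal (Real.exp (-a * s)) * ∫⁻ t in E, g t ∂ν := by
      rw [← lintegral_indicator hE, ← lintegral_const_mul _ (hgmeas.indicator hE)]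
      refine lintegral_congr fun t => ?_
      by_cases ht : t ∈ E
      · have hmem : t + s ∈ (fun t => t + s) '' E := ⟨t, ht, rfl⟩
        simp only [indicator_of_mem hmem, indicator_of_mem ht, hg]
        rw [← ENNReal.ofReal_mul (Real.exp_nonneg _), ← Real.exp_add]
        congr 2
        ring
      · have hnmem : t + s ∉ (fun t => t + s) '' E := by
          rintro ⟨x, hx, hxe⟩
          have hxt : x = t := by simpa using hxe
          exact ht (hxt ▸ hx)
        rw [indicator_of_notMem hnmem, indicator_of_notMem ht, mul_zero]
    have hR : ∫⁻ u, ((fun t => t + s) '' E).indicator g u ∂(Measure.map (fun t => t + s) ν)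
        = ENNReal.ofReal (Real.exp (-a * s)) * ∫⁻ t in (fun t => t + s) '' E, g t ∂ν := by
      rw [hmapν s, lintegral_smul_measure, lintegral_indicator hFmeas, smul_eq_mul]
    have hne : ENNReal.ofReal (Real.exp (-a * s)) ≠ 0 := by
      simp [Real.exp_pos]
    have hnetop : ENNReal.ofReal (Real.exp (-a * s)) ≠ ⊤ := ENNReal.ofReal_ne_top
    have := hR.symm.trans (key.trans hL)
    rw [h1, h2]
    exact (ENNReal.mul_right_inj hne hnetop).mp this
  -- Haar uniqueness
  have heq : μ = (μ.addHaarScalarFactor (volume : Measure ℝ)) • (volume : Measure ℝ) :=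
    Measure.isAddLeftInvariant_eq_smul μ volume
  set c : NNReal := μ.addHaarScalarFactor (volume : Measure ℝ) with hc
  refine ⟨(c : ℝ), c.coe_nonneg, ?_⟩
  -- recover ν from μ
  have hginv : ∀ t, (g t)⁻¹ = ENNReal.ofReal (Real.exp (a * t)) := by
    intro t
    rw [hg]
    rw [← ENNReal.ofReal_inv_of_pos (Real.exp_pos _)]
    congr 1
    rw [← Real.exp_neg]
    ring_nf
  have hν : ν = μ.withDensity (fun t => (g t)⁻¹) := by
    rw [hμ, withDensity_inv_same hgmeas]
    · filter_upwards with t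
      simp [hg, Real.exp_pos, (Real.exp_pos _).ne']
    · filter_upwards with t
      exact ENNReal.ofReal_ne_top
  rw [hν, heq, ENNReal.smul_def, withDensity_smul_measure,
    ← withDensity_smul' ((c : ℝ≥0∞)) _ ENNReal.coe_ne_top]
  congr 1
  funext t
  simp only [Pi.smul_apply, smul_eq_mul]
  rw [hginv t, ENNReal.ofReal_mul c.coe_nonneg, ENNReal.ofReal_coe_nnreal]
end

section
/- Let x > 0 and let μ be a locally finite Borel measure on (0,∞) satisfying: (i) scaling covariance, μ(λ·A) = λ^(x/2) · μ(A) for every Borel set A ⊆ (0,∞) and every λ > 0; and (ii) Gaussian normalization, the function u ↦ e^(−u) is μ-integrable with ∫₀^∞ e^(−u) dμ(u) = π^(x/2). Then μ equals the Mellin–Gamma measure, i.e. the measure with density u ↦ (π^(x/2)/Γ(x/2)) · u^(x/2−1) with respect to Lebesgue measure on (0,∞), where Γ denotes the real Gamma function. -/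
open MeasureTheory Set

/-- If a measure vanishes on `Iic 0`, then `Ioc a b` has the same measure
as `Ioc (max a 0) b`. -/
lemma aux_measure_Ioc_max (ξ : Measure ℝ) (h : ξ (Iic 0) = 0) (a b : ℝ) :
    ξ (Ioc a b) = ξ (Ioc (max a 0) b) := by
  refine le_antisymm ?_ (measure_mono (Ioc_subset_Ioc_left (le_max_left a 0)))
  have hsub : Ioc a b ⊆ Ioc (max a 0) b ∪ Iic 0 := by
    intro u hu
    rcases le_or_gt u 0 with h0 | h0
    · exact Or.inr h0
    · exact Or.inl ⟨max_lt hu.1 h0, hu.2⟩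
  calc ξ (Ioc a b) ≤ ξ (Ioc (max a 0) b ∪ Iic 0) := measure_mono hsub
    _ ≤ ξ (Ioc (max a 0) b) + ξ (Iic 0) := measure_union_le _ _
    _ = ξ (Ioc (max a 0) b) := by rw [h, add_zero]

/-- **Mellin–Gamma classification.** Let `x > 0` and let `μ` be a locally
finite Borel measure on `(0,∞)` (encoded as a Borel measure on `ℝ` vanishing on `(-∞,0]`
and locally finite at every point of `(0,∞)`) satisfying scaling covariance of degree `x/2`
and the Gaussian normalization `∫ e^(-u) dμ(u) = π^(x/2)`.  Then `μ` is the Mellin–Gamma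
measure with density `u ↦ (π^(x/2)/Γ(x/2)) · u^(x/2-1)` with respect to Lebesgue measure
on `(0,∞)`. -/
theorem mellin_gamma_classification
    (x : ℝ) (hx : 0 < x) (μ : Measure ℝ)
    (hsupp : μ (Iic 0) = 0)
    (hloc : ∀ u : ℝ, 0 < u → ∃ s ∈ nhds u, μ s < ⊤)
    (hscal : ∀ lam : ℝ, 0 < lam → ∀ A : Set ℝ, MeasurableSet A → A ⊆ Ioi 0 →
      μ ((fun u => lam * u) '' A) = ENNReal.ofReal (lam ^ (x / 2)) * μ A)
    (hgauss_int : Integrable (fun u => Real.exp (-u)) μ)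
    (hgauss : ∫ u, Real.exp (-u) ∂μ = Real.pi ^ (x / 2)) :
    μ = (volume.restrict (Ioi 0)).withDensity
      (fun u => ENNReal.ofReal
        (Real.pi ^ (x / 2) / Real.Gamma (x / 2) * u ^ (x / 2 - 1))) := by
  set s : ℝ := x / 2 with hs_def
  have hs : 0 < s := by positivity
  -- Step A: finiteness on compact subintervals of (0,∞)
  have hfin : ∀ a b : ℝ, 0 < a → μ (Ioc a b) ≠ ⊤ := by
    intro a b ha
    rcases le_or_gt b a with hba | hab
    · simp [Ioc_eq_empty_of_le hba]
    · choose U hU hUfin using fun (p : Icc a b) =>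
        hloc p.1 (lt_of_lt_of_le ha p.2.1)
      obtain ⟨t, ht⟩ := (isCompact_Icc (a := a) (b := b)).elim_nhds_subcover'
        (fun p hp => U ⟨p, hp⟩) (fun p hp => hU ⟨p, hp⟩)
      have : μ (Ioc a b) ≤ μ (⋃ p ∈ t, U p) :=
        measure_mono (Ioc_subset_Icc_self.trans ht)
      refine ne_top_of_le_ne_top ?_ this
      exact (measure_biUnion_lt_top t.finite_toSet (fun p _ => hUfin p)).ne
  -- Step B: scaling on intervals
  have hBscal : ∀ a r : ℝ, 0 < a →
      μ (Ioc a (a * r)) = ENNReal.ofReal (a ^ s) * μ (Ioc 1 r) := by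
    intro a r ha
    have := hscal a ha (Ioc 1 r) measurableSet_Ioc (fun u hu => lt_trans one_pos hu.1)
    rwa [show (fun u => a * u) '' Ioc 1 r = Ioc a (a * r) by
      rw [image_mul_left_Ioc ha, mul_one]] at this
  -- the interval function
  set F : ℝ → ℝ := fun r => (μ (Ioc 1 r)).toReal with hF_def
  have hFnn : ∀ r, 0 ≤ F r := fun r => ENNReal.toReal_nonneg
  -- Step C: functional equation
  have hC : ∀ p q : ℝ, 1 ≤ p → 1 ≤ q → F (p * q) = F p + p ^ s * F q := by
    intro p q hp hq
    have hp0 : 0 < p := lt_of_lt_of_le one_pos hp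
    have hpq : p ≤ p * q := le_mul_of_one_le_right hp0.le hq
    have hsplit : Ioc 1 p ∪ Ioc p (p * q) = Ioc 1 (p * q) := Ioc_union_Ioc_eq_Ioc hp hpq
    have hdisj : Disjoint (Ioc (1:ℝ) p) (Ioc p (p * q)) := Ioc_disjoint_Ioc_of_le le_rfl
    have hadd : μ (Ioc 1 (p * q)) = μ (Ioc 1 p) + μ (Ioc p (p * q)) := by
      rw [← hsplit, measure_union hdisj measurableSet_Ioc]
    rw [hF_def]
    simp only
    rw [hadd, hBscal p q hp0,
      ENNReal.toReal_add (hfin 1 p one_pos)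
        (by rw [hBscal p q hp0] at *; exact ENNReal.mul_ne_top ENNReal.ofReal_ne_top (hfin 1 q one_pos)),
      ENNReal.toReal_mul, ENNReal.toReal_ofReal (Real.rpow_nonneg hp0.le s)]
  -- Step D: identify F
  have h2s : (1:ℝ) < 2 ^ s := Real.one_lt_rpow_iff_of_pos (by norm_num) |>.mpr (Or.inl ⟨one_lt_two, hs⟩)
  set c : ℝ := F 2 / (2 ^ s - 1) with hc_def
  have hcnn : 0 ≤ c := div_nonneg (hFnn 2) (by linarith)
  have hD : ∀ r : ℝ, 1 ≤ r → F r = c * (r ^ s - 1) := by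
    intro r hr
    have h1 := hC r 2 hr one_le_two
    have h2 := hC 2 r one_le_two hr
    rw [mul_comm] at h2
    -- F r + r^s * F 2 = F 2 + 2^s * F r
    have key : F r * (2 ^ s - 1) = F 2 * (r ^ s - 1) := by
      have := h1.symm.trans h2
      ring_nf
      ring_nf at this
      linarith
    have hne : (0:ℝ) < 2 ^ s - 1 := by linarith
    rw [hc_def, div_mul_eq_mul_div, eq_div_iff hne.ne']
    linarith [key]
  -- Step E: measure of Ioc a b for 0 < a ≤ b
  have hE : ∀ a b : ℝ, 0 < a → a ≤ b →
      μ (Ioc a b) = ENNReal.ofReal (c * (b ^ s - a ^ s)) := by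
    intro a b ha hab
    have hr : 1 ≤ b / a := (one_le_div ha).mpr hab
    have : μ (Ioc a b) = ENNReal.ofReal (a ^ s) * μ (Ioc 1 (b / a)) := by
      have := hBscal a (b / a) ha
      rwa [mul_div_cancel₀ b ha.ne'] at this
    rw [this, ← ENNReal.ofReal_toReal (hfin 1 (b / a) one_pos),
      show (μ (Ioc 1 (b / a))).toReal = F (b / a) from rfl, hD _ hr,
      ← ENNReal.ofReal_mul (Real.rpow_nonneg ha.le s)]
    congr 1
    rw [Real.div_rpow (le_trans ha.le hab) ha.le]
    have has : (0:ℝ) < a ^ s := Real.rpow_pos_of_pos ha s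
    field_simp
  -- Step F: measure of Ioc 0 b
  have hF0 : ∀ b : ℝ, 0 < b → μ (Ioc 0 b) = ENNReal.ofReal (c * b ^ s) := by
    intro b hb
    have hpos : ∀ n : ℕ, (0:ℝ) < b / (n + 2) := fun n => by positivity
    have hle : ∀ n : ℕ, b / (n + 2) ≤ b := fun n =>
      div_le_self hb.le (by exact_mod_cast le_add_of_nonneg_left (by positivity))
    have hmono : Monotone (fun n : ℕ => Ioc (b / (n + 2)) b) := by
      intro m n hmn
      apply Ioc_subset_Ioc_left
      exact div_le_div_of_nonneg_left hb.le (by positivity)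
        (by have : (m:ℝ) ≤ n := Nat.cast_le.mpr hmn; linarith)
    have hU : Ioc 0 b = ⋃ n : ℕ, Ioc (b / (n + 2)) b := by
      ext u
      simp only [mem_iUnion, mem_Ioc]
      constructor
      · rintro ⟨hu, hub⟩
        obtain ⟨n, hn⟩ := exists_nat_gt (b / u)
        refine ⟨n, ?_, hub⟩
        rw [div_lt_iff₀ (by positivity)]
        calc b = (b / u) * u := by field_simp
          _ < ((n:ℝ) + 2) * u := by
              apply mul_lt_mul_of_pos_right _ hu
              linarith
          _ = u * ((n:ℝ) + 2) := by ring
      · rintro ⟨n, hn, hub⟩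
        exact ⟨lt_trans (hpos n) hn, hub⟩
    have hlim := tendsto_measure_iUnion_atTop (μ := μ) hmono
    rw [← hU] at hlim
    have hcomp : (μ ∘ fun n : ℕ => Ioc (b / (n + 2)) b)
        = fun n : ℕ => ENNReal.ofReal (c * (b ^ s - (b / (n + 2)) ^ s)) := by
      funext n
      exact hE _ _ (hpos n) (hle n)
    rw [hcomp] at hlim
    have htend0 : Filter.Tendsto (fun n : ℕ => b / ((n:ℝ) + 2)) Filter.atTop (nhds 0) :=
      Filter.Tendsto.div_atTop tendsto_const_nhds
        (Filter.tendsto_atTop_add_const_right _ 2 (tendsto_natCast_atTop_atTop (R := ℝ)))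
    have htends : Filter.Tendsto (fun n : ℕ => (b / ((n:ℝ) + 2)) ^ s) Filter.atTop (nhds 0) := by
      have hcont := Real.continuousAt_rpow_const 0 s (Or.inr hs.le)
      have := hcont.tendsto.comp htend0
      rwa [Real.zero_rpow hs.ne'] at this
    have hlim2 : Filter.Tendsto (fun n : ℕ => ENNReal.ofReal (c * (b ^ s - (b / (n + 2)) ^ s)))
        Filter.atTop (nhds (ENNReal.ofReal (c * b ^ s))) := by
      apply ENNReal.continuous_ofReal.continuousAt.tendsto.comp
      have : Filter.Tendsto (fun n : ℕ => c * (b ^ s - (b / (n + 2)) ^ s)) Filter.atTop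
          (nhds (c * (b ^ s - 0))) := (tendsto_const_nhds.sub htends).const_mul c
      simpa using this
    exact tendsto_nhds_unique hlim hlim2
  -- unified formula for 0 ≤ a ≤ b
  have hμIoc : ∀ a b : ℝ, 0 ≤ a → a ≤ b →
      μ (Ioc a b) = ENNReal.ofReal (c * (b ^ s - a ^ s)) := by
    intro a b ha hab
    rcases eq_or_lt_of_le ha with h0 | h0
    · rcases eq_or_lt_of_le hab with hb | hb
      · rw [← hb, ← h0]
        simp [Real.zero_rpow hs.ne']
      · rw [← h0] at hb ⊢
        rw [hF0 b hb, Real.zero_rpow hs.ne', sub_zero]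
    · exact hE a b h0 hab
  -- the candidate measure
  set K : ℝ := c * s with hK_def
  have hKnn : 0 ≤ K := mul_nonneg hcnn hs.le
  set ν : Measure ℝ := (volume.restrict (Ioi 0)).withDensity
    (fun u => ENNReal.ofReal (K * u ^ (s - 1))) with hν_def
  have hνIic : ν (Iic 0) = 0 := by
    rw [hν_def, withDensity_apply _ measurableSet_Iic,
      Measure.restrict_restrict measurableSet_Iic]
    have hempty : Iic (0:ℝ) ∩ Ioi 0 = ∅ := by
      ext u
      simp only [mem_inter_iff, mem_Iic, mem_Ioi, mem_empty_iff_false, iff_false, not_and]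
      intro h1 h2
      linarith
    simp [hempty]
  have hνIoc : ∀ a b : ℝ, 0 ≤ a → a ≤ b →
      ν (Ioc a b) = ENNReal.ofReal (c * (b ^ s - a ^ s)) := by
    intro a b ha hab
    have hsub : Ioc a b ⊆ Ioi 0 := fun u hu => lt_of_le_of_lt ha hu.1
    rw [hν_def, withDensity_apply _ measurableSet_Ioc,
      Measure.restrict_restrict measurableSet_Ioc, inter_eq_self_of_subset_left hsub]
    have hint : IntegrableOn (fun u : ℝ => K * u ^ (s - 1)) (Ioc a b) volume :=
      (intervalIntegrable_iff_integrableOn_Ioc_of_le hab).mp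
        ((intervalIntegral.intervalIntegrable_rpow' (by linarith)).const_mul K)
    have hnn : 0 ≤ᵐ[volume.restrict (Ioc a b)] fun u : ℝ => K * u ^ (s - 1) := by
      refine ae_restrict_of_forall_mem measurableSet_Ioc fun u hu => ?_
      exact mul_nonneg hKnn (Real.rpow_nonneg (le_of_lt (lt_of_le_of_lt ha hu.1)) _)
    rw [← MeasureTheory.ofReal_integral_eq_lintegral_ofReal hint hnn]
    congr 1
    rw [← intervalIntegral.integral_of_le hab, intervalIntegral.integral_const_mul,
      integral_rpow (Or.inl (by linarith)), sub_add_cancel, hK_def]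
    field_simp
  -- μ = ν
  have hμν : μ = ν := by
    refine Measure.ext_of_Ioc' μ ν (fun a b hab => ?_) (fun a b hab => ?_)
    · rw [aux_measure_Ioc_max μ hsupp a b]
      rcases le_or_gt b 0 with hb | hb
      · rw [Ioc_eq_empty (not_lt.mpr (hb.trans (le_max_right a 0)))]
        simp
      · rw [hμIoc (max a 0) b (le_max_right a 0) (max_le hab.le hb.le)]
        exact ENNReal.ofReal_ne_top
    · rw [aux_measure_Ioc_max μ hsupp a b, aux_measure_Ioc_max ν hνIic a b]
      rcases le_or_gt b 0 with hb | hb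
      · rw [Ioc_eq_empty (not_lt.mpr (hb.trans (le_max_right a 0)))]
        simp
      · rw [hμIoc (max a 0) b (le_max_right a 0) (max_le hab.le hb.le),
          hνIoc (max a 0) b (le_max_right a 0) (max_le hab.le hb.le)]
  -- Gaussian normalization determines K
  have hmeas : Measurable fun u : ℝ => (K * u ^ (s - 1)).toNNReal := by
    apply Measurable.real_toNNReal
    apply Measurable.const_mul
    fun_prop
  have hgint : ∫ u, Real.exp (-u) ∂ν = K * Real.Gamma s := by
    rw [hν_def,
      show (fun u : ℝ => ENNReal.ofReal (K * u ^ (s - 1)))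
        = fun u => ((K * u ^ (s - 1)).toNNReal : ENNReal) from rfl,
      integral_withDensity_eq_integral_smul hmeas]
    have hcongr : ∫ u in Ioi (0:ℝ), (K * u ^ (s - 1)).toNNReal • Real.exp (-u)
        = ∫ u in Ioi (0:ℝ), K * (Real.exp (-u) * u ^ (s - 1)) := by
      refine setIntegral_congr_fun measurableSet_Ioi fun u hu => ?_
      rw [NNReal.smul_def,
        Real.coe_toNNReal _ (mul_nonneg hKnn (Real.rpow_nonneg (le_of_lt hu) _))]
      simp only [smul_eq_mul]
      ring
    rw [hcongr, MeasureTheory.integral_const_mul, ← Real.Gamma_eq_integral hs]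
  have hKval : K = Real.pi ^ s / Real.Gamma s := by
    have hΓ : 0 < Real.Gamma s := Real.Gamma_pos_of_pos hs
    rw [eq_div_iff hΓ.ne', ← hgint, ← hμν, hgauss]
  rw [hμν, hν_def, hKval]
end

section
/- Let x > 0 and let μ be a locally finite Borel measure on (0,∞) satisfying μ(λ·A) = λ^(x/2) · μ(A) for every Borel set A ⊆ (0,∞) and every λ > 0, and ∫₀^∞ e^(−u) dμ(u) = π^(x/2). Then for every nonnegative Borel measurable function φ : (0,∞) → [0,∞], the Lebesgue integral of φ against μ equals (π^(x/2)/Γ(x/2)) · ∫₀^∞ φ(u) · u^(x/2−1) du; that is, μ-integration is the normalized Mellin transform evaluated at s = x/2. -/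
open MeasureTheory Set
open scoped ENNReal

/-- **Mellin reformulation.** Let `x > 0` and let `μ` be a locally finite
Borel measure on `(0,∞)` (encoded as a Borel measure on `ℝ` vanishing on `(-∞,0]` and
locally finite at every point of `(0,∞)`) satisfying scaling covariance of degree `x/2`
and `∫ e^(-u) dμ(u) = π^(x/2)`.  Then for every nonnegative Borel function `φ`, the
integral of `φ` against `μ` is the normalized Mellin transform
`(π^(x/2)/Γ(x/2)) · ∫₀^∞ φ(u) u^(x/2-1) du`. -/
theorem mellin_gamma_functional_is_normalized_mellin_transform
    (x : ℝ) (hx : 0 < x) (μ : Measure ℝ)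
    (hsupp : μ (Iic 0) = 0)
    (hloc : ∀ u : ℝ, 0 < u → ∃ s ∈ nhds u, μ s < ⊤)
    (hscal : ∀ lam : ℝ, 0 < lam → ∀ A : Set ℝ, MeasurableSet A → A ⊆ Ioi 0 →
      μ ((fun u => lam * u) '' A) = ENNReal.ofReal (lam ^ (x / 2)) * μ A)
    (hgauss : ∫⁻ u, ENNReal.ofReal (Real.exp (-u)) ∂μ
      = ENNReal.ofReal (Real.pi ^ (x / 2))) :
    ∀ φ : ℝ → ℝ≥0∞, Measurable φ →
      ∫⁻ u, φ u ∂μ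
        = ENNReal.ofReal (Real.pi ^ (x / 2) / Real.Gamma (x / 2)) *
            ∫⁻ u in Ioi (0:ℝ), φ u * ENNReal.ofReal (u ^ (x / 2 - 1)) := by
  set s : ℝ := x / 2 with hsdef
  have hs : 0 < s := by positivity
  -- scaling on Ioc intervals
  have hIoc : ∀ lam : ℝ, 0 < lam → ∀ p q : ℝ, 0 ≤ p →
      μ (Ioc (lam * p) (lam * q)) = ENNReal.ofReal (lam ^ s) * μ (Ioc p q) := by
    intro lam hlam p q hp
    rw [← Set.image_mul_left_Ioc hlam]
    exact hscal lam hlam _ measurableSet_Ioc (fun u hu => hp.trans_lt hu.1)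
  -- local finiteness near 1 gives a finite annulus
  obtain ⟨t, ht, htfin⟩ := hloc 1 one_pos
  obtain ⟨a, b, hab, hsub⟩ := mem_nhds_iff_exists_Ioo_subset.mp ht
  set r : ℝ := max a (1/2) with hrdef
  have hr0 : 0 < r := lt_max_of_lt_right (by norm_num)
  have hr1 : r < 1 := max_lt hab.1 (by norm_num)
  have hKfin : μ (Ioc r 1) < ⊤ := by
    refine lt_of_le_of_lt (measure_mono ?_) htfin
    refine Subset.trans ?_ hsub
    intro u hu
    exact ⟨lt_of_le_of_lt (le_max_left a (1/2)) hu.1, lt_of_le_of_lt hu.2 hab.2⟩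
  set c : ℝ≥0∞ := μ (Ioc 0 1) with hcdef
  -- finiteness of c
  have hcfin : c < ⊤ := by
    have hcover : Ioc (0:ℝ) 1 ⊆ ⋃ n : ℕ, Ioc (r ^ (n+1)) (r ^ n) := by
      intro u hu
      have hex : ∃ n : ℕ, r ^ (n+1) < u := by
        obtain ⟨n, hn⟩ := exists_pow_lt_of_lt_one hu.1 hr1
        exact ⟨n, lt_of_le_of_lt (pow_le_pow_of_le_one hr0.le hr1.le (Nat.le_succ n)) hn⟩
      classical
      set n := Nat.find hex with hn
      refine mem_iUnion.mpr ⟨n, Nat.find_spec hex, ?_⟩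
      rcases Nat.eq_zero_or_pos n with h0 | hpos
      · rw [h0]; simpa using hu.2
      · have := Nat.find_min hex (m := n - 1) (by omega)
        push_neg at this
        simpa [Nat.sub_add_cancel hpos] using this
    have hann : ∀ n : ℕ, μ (Ioc (r ^ (n+1)) (r ^ n))
        = ENNReal.ofReal (r ^ s) ^ n * μ (Ioc r 1) := by
      intro n
      have h := hIoc (r ^ n) (pow_pos hr0 n) r 1 hr0.le
      rw [mul_one, ← pow_succ] at h
      rw [h]
      congr 1
      rw [← ENNReal.ofReal_pow (Real.rpow_nonneg hr0.le s)]
      congr 1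
      rw [← Real.rpow_natCast (r ^ s) n, ← Real.rpow_natCast r n,
        ← Real.rpow_mul hr0.le, ← Real.rpow_mul hr0.le, mul_comm]
    calc c ≤ ∑' n : ℕ, μ (Ioc (r ^ (n+1)) (r ^ n)) :=
        (measure_mono hcover).trans (measure_iUnion_le _)
      _ = (∑' n : ℕ, ENNReal.ofReal (r ^ s) ^ n) * μ (Ioc r 1) := by
          rw [tsum_congr hann, ENNReal.tsum_mul_right]
      _ < ⊤ := by
          refine ENNReal.mul_lt_top ?_ hKfin
          rw [ENNReal.tsum_geometric]
          refine ENNReal.inv_lt_top.mpr ?_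
          rw [tsub_pos_iff_lt]
          exact ENNReal.ofReal_lt_one.mpr (Real.rpow_lt_one hr0.le hr1 hs)
  -- distribution function
  have hF : ∀ q : ℝ, 0 < q → μ (Ioc 0 q) = ENNReal.ofReal (q ^ s) * c := by
    intro q hq
    have := hIoc q hq 0 1 le_rfl
    simpa using this
  have hfin : ∀ q : ℝ, μ (Ioc 0 q) ≠ ⊤ := by
    intro q
    refine ne_of_lt (lt_of_le_of_lt (measure_mono (Ioc_subset_Ioc_right (le_max_left q 1))) ?_)
    rw [hF (max q 1) (lt_max_of_lt_right one_pos)]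
    exact ENNReal.mul_lt_top ENNReal.ofReal_lt_top hcfin
  -- the candidate measure
  set f : ℝ → ℝ≥0∞ := fun u => c * ENNReal.ofReal (s * u ^ (s - 1)) with hfdef
  have hfmeas : Measurable f := by
    apply measurable_const.mul
    exact (measurable_const.mul (by fun_prop : Measurable fun u : ℝ => u ^ (s - 1))).ennreal_ofReal
  set ν : Measure ℝ := (volume.restrict (Ioi 0)).withDensity f with hνdef
  -- compute ν on Ioc p q for 0 ≤ p ≤ q
  have hν : ∀ p q : ℝ, 0 ≤ p → p ≤ q →
      ν (Ioc p q) = c * ENNReal.ofReal (q ^ s - p ^ s) := by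
    intro p q hp hpq
    rw [hνdef, withDensity_apply _ measurableSet_Ioc, Measure.restrict_restrict measurableSet_Ioc]
    have hsubset : Ioc p q ∩ Ioi 0 = Ioc p q := by
      rw [inter_eq_left]
      exact fun u hu => hp.trans_lt hu.1
    rw [hsubset, hfdef]
    simp only
    rw [lintegral_const_mul _ (f := fun u : ℝ => ENNReal.ofReal (s * u ^ (s - 1))) ((measurable_const.mul
      (by fun_prop : Measurable fun u : ℝ => u ^ (s - 1))).ennreal_ofReal)]
    congr 1
    have hint : IntegrableOn (fun u : ℝ => s * u ^ (s - 1)) (Ioc p q) := by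
      refine Integrable.const_mul ?_ s
      exact (intervalIntegrable_iff_integrableOn_Ioc_of_le hpq).mp
        (intervalIntegral.intervalIntegrable_rpow' (by linarith))
    have hnn : 0 ≤ᵐ[volume.restrict (Ioc p q)] fun u : ℝ => s * u ^ (s - 1) := by
      filter_upwards [self_mem_ae_restrict measurableSet_Ioc] with u hu
      exact mul_nonneg hs.le (Real.rpow_nonneg (hp.trans hu.1.le) _)
    rw [← ofReal_integral_eq_lintegral_ofReal hint hnn]
    congr 1
    rw [← intervalIntegral.integral_of_le hpq, intervalIntegral.integral_const_mul,
      integral_rpow (Or.inl (by linarith))]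
    have hss : s - 1 + 1 = s := by ring
    rw [hss]
    field_simp
  -- μ = ν
  have hμν : μ = ν := by
    refine Measure.ext_of_Ioc' μ ν (fun p q _ => ?_) (fun p q hpq => ?_)
    · have hsub2 : Ioc p q ⊆ Iic 0 ∪ Ioc 0 q := fun u hu => by
        rcases le_or_gt u 0 with h | h
        · exact Or.inl h
        · exact Or.inr ⟨h, hu.2⟩
      refine ne_of_lt (lt_of_le_of_lt (measure_mono hsub2) ?_)
      refine lt_of_le_of_lt (measure_union_le _ _) ?_
      rw [hsupp, zero_add]
      exact lt_of_le_of_ne le_top (hfin q)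
    · rcases le_or_gt q 0 with hq | hq
      · have h1 : μ (Ioc p q) = 0 :=
          measure_mono_null (fun u hu => le_trans hu.2 hq) hsupp
        have h2 : ν (Ioc p q) = 0 := by
          rw [hνdef, withDensity_apply _ measurableSet_Ioc,
            Measure.restrict_restrict measurableSet_Ioc]
          have hempty : Ioc p q ∩ Ioi 0 = ∅ := by
            rw [eq_empty_iff_forall_notMem]
            rintro u ⟨hu1, hu2⟩
            exact (hu2.trans_le (hu1.2.trans hq)).false
          rw [hempty]
          simp
        rw [h1, h2]
      · set p' : ℝ := max p 0 with hp'def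
        have hp'0 : 0 ≤ p' := le_max_right p 0
        have hp'q : p' ≤ q := max_le hpq.le hq.le
        have hred : ∀ m : Measure ℝ, m (Iic 0) = 0 → m (Ioc p q) = m (Ioc p' q) := by
          intro m hm
          refine le_antisymm ?_ (measure_mono (Ioc_subset_Ioc_left (le_max_left p 0)))
          calc m (Ioc p q) ≤ m (Ioc p' q ∪ Iic 0) := measure_mono (fun u hu => by
              rcases lt_or_ge 0 u with h | h
              · exact Or.inl ⟨max_lt hu.1 h, hu.2⟩
              · exact Or.inr h)
            _ ≤ m (Ioc p' q) + m (Iic 0) := measure_union_le _ _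
            _ = m (Ioc p' q) := by rw [hm, add_zero]
        have hνsupp : ν (Iic 0) = 0 := by
          rw [hνdef, withDensity_apply _ measurableSet_Iic,
            Measure.restrict_restrict measurableSet_Iic]
          have hempty : Iic (0:ℝ) ∩ Ioi 0 = ∅ := by
            rw [eq_empty_iff_forall_notMem]
            rintro u ⟨h1, h2⟩
            exact absurd (lt_of_lt_of_le (Set.mem_Ioi.mp h2) (Set.mem_Iic.mp h1)) (lt_irrefl 0)
          rw [hempty]; simp
        rw [hred μ hsupp, hred ν hνsupp]
        have hμval : μ (Ioc p' q) = c * ENNReal.ofReal (q ^ s - p' ^ s) := by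
          rcases eq_or_lt_of_le hp'0 with h0 | h0
          · rw [← h0, hF q hq, Real.zero_rpow hs.ne', sub_zero, mul_comm]
          · have hadd : μ (Ioc 0 p') + μ (Ioc p' q) = μ (Ioc 0 q) := by
              rw [← measure_union (Set.Ioc_disjoint_Ioc_of_le le_rfl) measurableSet_Ioc,
                Ioc_union_Ioc_eq_Ioc h0.le hp'q]
            have hps : p' ^ s ≤ q ^ s := Real.rpow_le_rpow h0.le hp'q hs.le
            have hadd2 : μ (Ioc 0 p') + c * ENNReal.ofReal (q ^ s - p' ^ s) = μ (Ioc 0 q) := by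
              rw [hF p' h0, hF q hq, mul_comm (ENNReal.ofReal (p' ^ s)) c,
                ← mul_add, ← ENNReal.ofReal_add (Real.rpow_nonneg hp'0 s) (by linarith)]
              rw [mul_comm]
              congr 2
              ring
            rw [← hadd] at hadd2
            exact ((ENNReal.add_right_inj (hfin p')).mp hadd2).symm
        rw [hμval, hν p' q hp'0 hp'q]
  -- integration against ν
  have key : ∀ φ : ℝ → ℝ≥0∞, Measurable φ →
      ∫⁻ u, φ u ∂ν = (c * ENNReal.ofReal s) *
        ∫⁻ u in Ioi (0:ℝ), φ u * ENNReal.ofReal (u ^ (s - 1)) := by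
    intro φ hφ
    rw [hνdef, lintegral_withDensity_eq_lintegral_mul _ hfmeas hφ]
    have hfun : (fun u => (f * φ) u)
        = fun u => (c * ENNReal.ofReal s) * (φ u * ENNReal.ofReal (u ^ (s - 1))) := by
      funext u
      simp only [Pi.mul_apply, hfdef]
      rw [ENNReal.ofReal_mul hs.le]
      ring
    rw [hfun, lintegral_const_mul' _ _ (ENNReal.mul_ne_top hcfin.ne ENNReal.ofReal_ne_top)]
  -- determine the constant from the Gaussian normalization
  have hexp : Measurable fun u : ℝ => ENNReal.ofReal (Real.exp (-u)) :=
    (Real.measurable_exp.comp measurable_neg).ennreal_ofReal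
  rw [hμν, key _ hexp] at hgauss
  have hGamma : (∫⁻ u in Ioi (0:ℝ),
      ENNReal.ofReal (Real.exp (-u)) * ENNReal.ofReal (u ^ (s - 1)))
      = ENNReal.ofReal (Real.Gamma s) := by
    rw [Real.Gamma_eq_integral hs,
      ofReal_integral_eq_lintegral_ofReal (Real.GammaIntegral_convergent hs) ?_]
    · refine lintegral_congr (fun u => ?_)
      rw [ENNReal.ofReal_mul (Real.exp_nonneg _)]
    · filter_upwards [self_mem_ae_restrict measurableSet_Ioi] with u hu
      exact mul_nonneg (Real.exp_nonneg _) (Real.rpow_nonneg (le_of_lt hu) _)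
  rw [hGamma] at hgauss
  have hΓpos : 0 < Real.Gamma s := Real.Gamma_pos_of_pos hs
  have hc : c * ENNReal.ofReal s = ENNReal.ofReal (Real.pi ^ s / Real.Gamma s) := by
    rw [ENNReal.ofReal_div_of_pos hΓpos]
    rw [ENNReal.eq_div_iff (ENNReal.ofReal_pos.mpr hΓpos).ne' ENNReal.ofReal_ne_top, mul_comm]
    exact hgauss
  intro φ hφ
  rw [hμν, key φ hφ, hc]
end
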